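/- Let L : Matrix(r×n, ℝ) → ℝ be smooth. Then the following two conditions together — (covariance) L(h·ẋ) = det h · L(ẋ) for all ẋ and all invertible h ∈ Matrix(r×r, ℝ), and (fundamental equations) ∂²L/∂ẋ_F^A∂ẋ_G^B + ∂²L/∂ẋ_G^A∂ẋ_F^B = 0 for all F, G ∈ {1,…,r} and A, B ∈ {1,…,n} — hold if and only if there exists an alternating r-multilinear map ω : (ℝⁿ)^r → ℝ such that L(ẋ) = ω(ẋ_1, …, ẋ_r), where ẋ_1, …, ẋ_r are the rows of ẋ. -/

import Mathlib

open MeasureTheory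
open scoped BigOperators

noncomputable section

/-- Product of matrices given as functions (entry `(i,k)` is `∑ j, M i j * N j k`). -/
def mmul {a b c : ℕ} (M : Fin a → Fin b → ℝ) (N : Fin b → Fin c → ℝ) :
    Fin a → Fin c → ℝ :=
  fun i k => ∑ j, M i j * N j k

/-- Determinant of a square matrix given as a function. -/
def fdet {a : ℕ} (M : Fin a → Fin a → ℝ) : ℝ :=
  Matrix.det (Matrix.of M)

/-- Partial derivative of a function of a matrix with respect to the `(i,j)` entry. -/
def pdM {a b : ℕ} (L : (Fin a → Fin b → ℝ) → ℝ) (i : Fin a) (j : Fin b)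
    (m : Fin a → Fin b → ℝ) : ℝ :=
  deriv (fun t : ℝ => L (fun i' j' => m i' j' + (if i' = i ∧ j' = j then t else 0))) 0

/-- Partial derivative of a function of a vector with respect to the `i`-th coordinate. -/
def pdV {a : ℕ} (f : (Fin a → ℝ) → ℝ) (i : Fin a) (x : Fin a → ℝ) : ℝ :=
  deriv (fun t : ℝ => f (fun i' => x i' + (if i' = i then t else 0))) 0

/-- The fundamental equations for a function of an `a × b` matrix:
for all rows `i₁, i₂` and columns `j₁, j₂`,
`∂²L/∂m_{i₁}^{j₁}∂m_{i₂}^{j₂} + ∂²L/∂m_{i₂}^{j₁}∂m_{i₁}^{j₂} = 0`. -/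
def FundEqs {a b : ℕ} (L : (Fin a → Fin b → ℝ) → ℝ) : Prop :=
  ∀ (i₁ i₂ : Fin a) (j₁ j₂ : Fin b) (m : Fin a → Fin b → ℝ),
    pdM (fun m' => pdM L i₂ j₂ m') i₁ j₁ m + pdM (fun m' => pdM L i₁ j₂ m') i₂ j₁ m = 0

/-- The velocity matrix of a path `γ`: `(vel γ t) F A = ∂γ^A/∂t^F (t)`. -/
def vel {r n : ℕ} (γ : (Fin r → ℝ) → (Fin n → ℝ)) (t : Fin r → ℝ) :
    Fin r → Fin n → ℝ :=
  fun F A => pdV (fun s => γ s A) F t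

/-- The matrix of gradients of a copath `f`: `(grad f x) A K = ∂f^K/∂x^A (x)`. -/
def grad {n k : ℕ} (f : (Fin n → ℝ) → (Fin k → ℝ)) (x : Fin n → ℝ) :
    Fin n → Fin k → ℝ :=
  fun A K => pdV (fun y => f y K) A x

/-- An even `r`-form on an open set `U ⊆ ℝⁿ`: a smooth function `L(x, ẋ)` of a point
`x` and an `r × n` matrix `ẋ` which is covariant (`L(x, h·ẋ) = det h · L(x, ẋ)` for
invertible `h`) and satisfies the fundamental equations in the entries of `ẋ`. -/
def IsEvenForm {n r : ℕ} (U : Set (Fin n → ℝ))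
    (L : (Fin n → ℝ) → (Fin r → Fin n → ℝ) → ℝ) : Prop :=
  ContDiffOn ℝ (⊤ : ℕ∞)
      (fun q : (Fin n → ℝ) × (Fin r → Fin n → ℝ) => L q.1 q.2)
      (U ×ˢ (Set.univ : Set (Fin r → Fin n → ℝ))) ∧
  (∀ x ∈ U, ∀ (xdot : Fin r → Fin n → ℝ) (h : Fin r → Fin r → ℝ), fdet h ≠ 0 →
    L x (mmul h xdot) = fdet h * L x xdot) ∧
  (∀ x ∈ U, FundEqs (L x))

/-- The differential of a Lagrangian of paths `L(x, ẋ)`: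
`ΔL(x, (ẋ; ẏ)) = (−1)^r Σ_A ẏ^A (∂L/∂x^A − Σ_{F,B} ẋ_F^B ∂²L/∂x^B∂ẋ_F^A)`,
where `ẋ` consists of the first `r` rows and `ẏ` is the last row of the argument. -/
def Dform {n r : ℕ} (L : (Fin n → ℝ) → (Fin r → Fin n → ℝ) → ℝ) :
    (Fin n → ℝ) → (Fin (r + 1) → Fin n → ℝ) → ℝ :=
  fun x M => (-1 : ℝ) ^ r * ∑ A, M (Fin.last r) A *
    (pdV (fun x' => L x' (fun F => M (Fin.castSucc F))) A x
      - ∑ F, ∑ B, M (Fin.castSucc F) B *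
          pdV (fun x' => pdM (L x') F A (fun G => M (Fin.castSucc G))) B x)

/-- An even mixed form of codegree `k` and additional degree `r` on an open set
`U ⊆ ℝⁿ`: a smooth function `𝓛(x, p, w)` which is right-covariant, left-covariant,
admissible, and satisfies the fundamental equations in the entries of the stacked
`(n+r) × k` matrix (`p` over `w`). -/
def IsMixedForm {n k r : ℕ} (U : Set (Fin n → ℝ))
    (L : (Fin n → ℝ) → (Fin n → Fin k → ℝ) → (Fin r → Fin k → ℝ) → ℝ) : Prop :=
  ContDiffOn ℝ (⊤ : ℕ∞)
      (fun q : (Fin n → ℝ) × (Fin n → Fin k → ℝ) × (Fin r → Fin k → ℝ) =>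
        L q.1 q.2.1 q.2.2)
      (U ×ˢ (Set.univ : Set ((Fin n → Fin k → ℝ) × (Fin r → Fin k → ℝ)))) ∧
  (∀ x ∈ U, ∀ (p : Fin n → Fin k → ℝ) (w : Fin r → Fin k → ℝ) (g : Fin k → Fin k → ℝ),
    fdet g ≠ 0 → L x (mmul p g) (mmul w g) = fdet g * L x p w) ∧
  (∀ x ∈ U, ∀ (p : Fin n → Fin k → ℝ) (w : Fin r → Fin k → ℝ) (h : Fin r → Fin r → ℝ),
    fdet h ≠ 0 → L x p (mmul h w) = fdet h * L x p w) ∧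
  (∀ x ∈ U, ∀ (p : Fin n → Fin k → ℝ) (w : Fin r → Fin k → ℝ) (a : Fin n → Fin r → ℝ),
    L x (p + mmul a w) w = L x p w) ∧
  (∀ x ∈ U, FundEqs (fun m : Fin (n + r) → Fin k → ℝ =>
    L x (fun A => m (Fin.castAdd r A)) (fun F => m (Fin.natAdd n F))))

/-- The differential of a mixed Lagrangian `𝓛(x, p, w)`:
`Δ𝓛(x, p, ŵ) = (−1)^r Σ_{K,A} w'^K ∂²𝓛/∂x^A∂p_A^K (x, p, w)`, where `ŵ` has first
`r` rows `w` and last row `w'`. -/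
def Dmix {n k r : ℕ}
    (L : (Fin n → ℝ) → (Fin n → Fin k → ℝ) → (Fin r → Fin k → ℝ) → ℝ) :
    (Fin n → ℝ) → (Fin n → Fin k → ℝ) → (Fin (r + 1) → Fin k → ℝ) → ℝ :=
  fun x p what => (-1 : ℝ) ^ r * ∑ K, ∑ A, what (Fin.last r) K *
    pdV (fun x' => pdM (fun p' => L x' p' (fun F => what (Fin.castSucc F))) A K p) A x

/-- An even dual form of codegree `k` on an open set `U ⊆ ℝⁿ`: a smooth function
`𝓛(x, p)` of a point `x` and an `n × k` matrix `p` of momenta which is covariant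
(`𝓛(x, p·g) = det g · 𝓛(x, p)` for invertible `g`) and satisfies the fundamental
equations in the entries of `p`. -/
def IsDualForm {n k : ℕ} (U : Set (Fin n → ℝ))
    (L : (Fin n → ℝ) → (Fin n → Fin k → ℝ) → ℝ) : Prop :=
  ContDiffOn ℝ (⊤ : ℕ∞)
      (fun q : (Fin n → ℝ) × (Fin n → Fin k → ℝ) => L q.1 q.2)
      (U ×ˢ (Set.univ : Set (Fin n → Fin k → ℝ))) ∧
  (∀ x ∈ U, ∀ (p : Fin n → Fin k → ℝ) (g : Fin k → Fin k → ℝ), fdet g ≠ 0 →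
    L x (mmul p g) = fdet g * L x p) ∧
  (∀ x ∈ U, FundEqs (L x))

/-- The identity matrix as a function. -/
def idm (n : ℕ) : Fin n → Fin n → ℝ := fun i j => if i = j then 1 else 0

section Statement2Aux

lemma st2_pdM_eq_of_affine {a b : ℕ} (L : (Fin a → Fin b → ℝ) → ℝ) (i : Fin a) (j : Fin b)
    (m : Fin a → Fin b → ℝ) (c d : ℝ)
    (h : ∀ t : ℝ, L (fun i' j' => m i' j' + (if i' = i ∧ j' = j then t else 0)) = c + t * d) :
    pdM L i j m = d := by
  unfold pdM
  rw [funext h]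
  have : HasDerivAt (fun t : ℝ => c + t * d) d 0 := by
    simpa using ((hasDerivAt_id (0:ℝ)).mul_const d).const_add c
  exact this.deriv

lemma st2_matline {a b : ℕ} (m : Fin a → Fin b → ℝ) (i : Fin a) (j : Fin b) (t : ℝ) :
    (fun i' j' => m i' j' + (if i' = i ∧ j' = j then t else 0))
      = Function.update m i (m i + t • (Pi.single j (1:ℝ) : Fin b → ℝ)) := by
  funext i' j'
  rcases eq_or_ne i' i with rfl | hi
  · simp [Pi.single_apply, mul_ite]
  · simp [Function.update_of_ne hi, hi]

variable {n r : ℕ} (ω : AlternatingMap ℝ (Fin n → ℝ) ℝ (Fin r))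

lemma st2_pd1 (i : Fin r) (j : Fin n) (m : Fin r → Fin n → ℝ) :
    pdM (fun m' => ω m') i j m = ω (Function.update m i (Pi.single j 1)) := by
  refine st2_pdM_eq_of_affine _ i j m (ω m) _ (fun t => ?_)
  rw [st2_matline, ω.map_update_add, ω.map_update_smul, Function.update_eq_self, smul_eq_mul]

lemma st2_pd2_same (i : Fin r) (j₁ j₂ : Fin n) (m : Fin r → Fin n → ℝ) :
    pdM (fun m' => ω (Function.update m' i (Pi.single j₂ 1))) i j₁ m = 0 := by
  refine st2_pdM_eq_of_affine _ i j₁ m (ω (Function.update m i (Pi.single j₂ 1))) 0 (fun t => ?_)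
  rw [st2_matline, Function.update_idem]
  ring

lemma st2_pd2_ne {i₁ i₂ : Fin r} (hne : i₁ ≠ i₂) (j₁ j₂ : Fin n) (m : Fin r → Fin n → ℝ) :
    pdM (fun m' => ω (Function.update m' i₂ (Pi.single j₂ 1))) i₁ j₁ m
      = ω (Function.update (Function.update m i₂ (Pi.single j₂ 1)) i₁ (Pi.single j₁ 1)) := by
  refine st2_pdM_eq_of_affine _ i₁ j₁ m (ω (Function.update m i₂ (Pi.single j₂ 1))) _ (fun t => ?_)
  rw [st2_matline, Function.update_comm hne]
  have hval : m i₁ = (Function.update m i₂ (Pi.single j₂ (1:ℝ))) i₁ :=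
    (Function.update_of_ne hne _ _).symm
  rw [hval, ω.map_update_add, ω.map_update_smul, Function.update_eq_self, smul_eq_mul]

lemma st2_fund_of_alt : FundEqs (fun m : Fin r → Fin n → ℝ => ω m) := by
  intro i₁ i₂ j₁ j₂ m
  have h2 : ∀ (i : Fin r) (j : Fin n),
      (fun m' => pdM (fun m'' : Fin r → Fin n → ℝ => ω m'') i j m')
        = fun m' => ω (Function.update m' i (Pi.single j 1)) :=
    fun i j => funext fun m' => st2_pd1 ω i j m'
  rw [h2, h2]
  rcases eq_or_ne i₁ i₂ with rfl | hne
  · simp [st2_pd2_same]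
  · rw [st2_pd2_ne ω hne, st2_pd2_ne ω hne.symm]
    have hkey : Function.update (Function.update m i₁ (Pi.single j₂ (1:ℝ))) i₂ (Pi.single j₁ 1)
        = (Function.update (Function.update m i₂ (Pi.single j₂ (1:ℝ))) i₁ (Pi.single j₁ 1))
            ∘ Equiv.swap i₁ i₂ := by
      funext a
      simp only [Function.comp_apply]
      rcases eq_or_ne a i₁ with rfl | h1
      · rw [Equiv.swap_apply_left]
        simp [Function.update_of_ne hne, Function.update_of_ne hne.symm]
      · rcases eq_or_ne a i₂ with rfl | h2'
        · rw [Equiv.swap_apply_right]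
          simp
        · rw [Equiv.swap_apply_of_ne_of_ne h1 h2']
          simp [Function.update_of_ne h1, Function.update_of_ne h2']
    rw [hkey, ω.map_swap _ hne]
    ring

lemma st2_cov_of_alt (v : Fin r → Fin n → ℝ) (h : Fin r → Fin r → ℝ) :
    ω (mmul h v) = fdet h * ω v := by
  classical
  let g : (Fin r → ℝ) →ₗ[ℝ] (Fin n → ℝ) :=
    { toFun := fun c => ∑ j, c j • v j
      map_add' := by intro x y; simp [add_smul, Finset.sum_add_distrib]
      map_smul' := by intro c x; simp [Finset.smul_sum, smul_smul] }
  have hmm : mmul h v = fun i => g (h i) := by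
    funext i k
    simp [mmul, g, Finset.sum_apply]
  have hF := (ω.compLinearMap g).eq_smul_basis_det (Pi.basisFun ℝ (Fin r))
  have hFh := AlternatingMap.congr_fun hF h
  rw [AlternatingMap.smul_apply] at hFh
  have e1 : (ω.compLinearMap g) h = ω (mmul h v) := by
    rw [hmm]; rfl
  have e2 : (ω.compLinearMap g) ⇑(Pi.basisFun ℝ (Fin r)) = ω v := by
    show ω (fun i => g ((Pi.basisFun ℝ (Fin r)) i)) = ω v
    congr 1
    funext i k
    simp [g, Pi.basisFun_apply, Pi.single_apply, ite_smul, Finset.sum_apply, ite_apply]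
  have e3 : (Pi.basisFun ℝ (Fin r)).det h = fdet h := by
    rw [Pi.basisFun_det]; rfl
  rw [e1, e2, e3] at hFh
  rw [hFh, smul_eq_mul, mul_comm]

/-- diagonal matrix with `c` in slot `i` and `1` elsewhere -/
def st2_dgm (i : Fin r) (c : ℝ) : Fin r → Fin r → ℝ :=
  fun a b => if a = b then (if a = i then c else 1) else 0

lemma st2_fdet_dgm (i : Fin r) (c : ℝ) : fdet (st2_dgm i c) = c := by
  have h : Matrix.of (st2_dgm i c) = Matrix.diagonal (fun a => if a = i then c else 1) := by
    ext a b
    simp [st2_dgm, Matrix.diagonal]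
  rw [fdet, h, Matrix.det_diagonal]
  simp

lemma st2_mmul_dgm (i : Fin r) (c : ℝ) (w : Fin r → Fin n → ℝ) :
    mmul (st2_dgm i c) w = Function.update w i (c • w i) := by
  funext a k
  have h : ∀ b : Fin r,
      st2_dgm i c a b * w b k = if b = a then (if a = i then c else 1) * w b k else 0 := by
    intro b
    rcases eq_or_ne a b with rfl | hab
    · simp [st2_dgm]
    · simp [st2_dgm, hab, Ne.symm hab]
  rw [mmul]
  rw [Finset.sum_congr rfl (fun b _ => h b), Finset.sum_ite_eq' Finset.univ a]
  rcases eq_or_ne a i with rfl | hai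
  · simp
  · simp [hai, Function.update_of_ne hai]

/-- permutation matrix of the swap -/
def st2_swm (i j : Fin r) : Fin r → Fin r → ℝ :=
  fun a b => if Equiv.swap i j a = b then 1 else 0

lemma st2_fdet_swm {i j : Fin r} (hij : i ≠ j) : fdet (st2_swm i j) = -1 := by
  have h : Matrix.of (st2_swm i j) = (Equiv.swap i j).toPEquiv.toMatrix := by
    ext a b
    simp [st2_swm, PEquiv.toMatrix, Equiv.toPEquiv, eq_comm]
  rw [fdet, h, Matrix.det_permutation, Equiv.Perm.sign_swap hij]
  simp

lemma st2_mmul_swm (i j : Fin r) (w : Fin r → Fin n → ℝ) :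
    mmul (st2_swm i j) w = w ∘ Equiv.swap i j := by
  funext a k
  rw [mmul]
  simp only [st2_swm, ite_mul, one_mul, zero_mul]
  rw [Finset.sum_ite_eq Finset.univ (Equiv.swap i j a)]
  simp

lemma st2_row_linear (L : (Fin r → Fin n → ℝ) → ℝ) (hL : ContDiff ℝ (⊤ : ℕ∞) L)
    (m : Fin r → Fin n → ℝ) (i : Fin r)
    (hhom : ∀ (c : ℝ), c ≠ 0 → ∀ w : Fin n → ℝ,
      L (Function.update m i (c • w)) = c * L (Function.update m i w))
    (v : Fin n → ℝ) :
    L (Function.update m i v)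
      = (fderiv ℝ (fun w => L (Function.update m i w)) 0) v := by
  set g : (Fin n → ℝ) → ℝ := fun w => L (Function.update m i w) with hg
  have hu : Differentiable ℝ (fun w : Fin n → ℝ => Function.update m i w) := by
    have h : (fun w : Fin n → ℝ => Function.update m i w)
        = fun w i' => if i' = i then w else m i' := by
      funext w i'
      exact Function.update_apply m i w i'
    rw [h]
    apply differentiable_pi.mpr
    intro i'
    rcases eq_or_ne i' i with rfl | hne
    · simp
    · simp [hne]
  have hgdiff : Differentiable ℝ g := (hL.differentiable (by simp)).comp hu
  have heq : (fun c : ℝ => g (c • v)) = fun c : ℝ => c * g v := by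
    apply Continuous.ext_on (dense_compl_singleton (0:ℝ))
    · exact hgdiff.continuous.comp (by fun_prop)
    · fun_prop
    · intro c hc
      exact hhom c hc v
  have hs : HasDerivAt (fun c : ℝ => c • v) v 0 := by
    simpa using (hasDerivAt_id (0:ℝ)).smul_const v
  have d1 : HasDerivAt (fun c : ℝ => g (c • v)) ((fderiv ℝ g 0) v) 0 := by
    have hF : HasFDerivAt g (fderiv ℝ g 0) ((0:ℝ) • v) := by
      rw [zero_smul]; exact (hgdiff 0).hasFDerivAt
    exact hF.comp_hasDerivAt 0 hs
  have d2 : HasDerivAt (fun c : ℝ => c * g v) (g v) 0 := by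
    simpa using (hasDerivAt_id (0:ℝ)).mul_const (g v)
  rw [heq] at d1
  exact (d1.unique d2).symm

end Statement2Aux

/-- A smooth `L : Matrix(r×n, ℝ) → ℝ` satisfies the covariance
condition `L(h·ẋ) = det h · L(ẋ)` for all invertible `h` together with the
fundamental equations if and only if `L` is given by an alternating `r`-multilinear
map evaluated on the rows of its argument. -/
theorem statement_2 (n r : ℕ) (L : (Fin r → Fin n → ℝ) → ℝ)
    (hL : ContDiff ℝ (⊤ : ℕ∞) L) :
    ((∀ (xdot : Fin r → Fin n → ℝ) (h : Fin r → Fin r → ℝ), fdet h ≠ 0 →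
        L (mmul h xdot) = fdet h * L xdot) ∧ FundEqs L)
    ↔ ∃ ω : AlternatingMap ℝ (Fin n → ℝ) ℝ (Fin r), ∀ m : Fin r → Fin n → ℝ,
        L m = ω m := by
  constructor
  · rintro ⟨hcov, -⟩
    have hhom : ∀ (m : Fin r → Fin n → ℝ) (i : Fin r) (c : ℝ), c ≠ 0 → ∀ w : Fin n → ℝ,
        L (Function.update m i (c • w)) = c * L (Function.update m i w) := by
      intro m i c hc w
      have h1 := hcov (Function.update m i w) (st2_dgm i c)
        (by rw [st2_fdet_dgm]; exact hc)
      rw [st2_fdet_dgm, st2_mmul_dgm, Function.update_self, Function.update_idem] at h1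
      exact h1
    have key : ∀ (m : Fin r → Fin n → ℝ) (i : Fin r) (v : Fin n → ℝ),
        L (Function.update m i v)
          = (fderiv ℝ (fun w => L (Function.update m i w)) 0) v :=
      fun m i v => st2_row_linear L hL m i (fun c hc w => hhom m i c hc w) v
    have hswap : ∀ (v : Fin r → Fin n → ℝ) (i j : Fin r), i ≠ j →
        L (v ∘ Equiv.swap i j) = -L v := by
      intro v i j hij
      have h1 := hcov v (st2_swm i j) (by rw [st2_fdet_swm hij]; norm_num)
      rw [st2_fdet_swm hij, st2_mmul_swm] at h1
      linarith
    refine ⟨⟨⟨L, ?_, ?_⟩, ?_⟩, fun m => rfl⟩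
    · intro dec m i x y
      rw [Subsingleton.elim dec (instDecidableEqFin r)]
      rw [key m i (x + y), key m i x, key m i y, map_add]
    · intro dec m i c x
      rw [Subsingleton.elim dec (instDecidableEqFin r)]
      rw [key m i (c • x), key m i x]
      exact (fderiv ℝ (fun w => L (@Function.update _ _ (instDecidableEqFin r) m i w)) 0).map_smul c x
    · intro v i j hv hij
      have h1 := hswap v i j hij
      have h2 : v ∘ Equiv.swap i j = v := by
        funext a
        simp only [Function.comp_apply]
        rcases eq_or_ne a i with rfl | h1a
        · rw [Equiv.swap_apply_left]; exact hv.symm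
        · rcases eq_or_ne a j with rfl | h2a
          · rw [Equiv.swap_apply_right]; exact hv
          · rw [Equiv.swap_apply_of_ne_of_ne h1a h2a]
      rw [h2] at h1
      linarith
  · rintro ⟨ω, hω⟩
    constructor
    · intro xdot h _
      rw [hω, hω, st2_cov_of_alt]
    · have hLe : L = fun m => ω m := funext hω
      rw [hLe]
      exact st2_fund_of_alt ω
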